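/- If a test set T₁ is complete for reversible circuit C₁ and T₂ is complete for C₂, then the test set obtained by tracing T₂ back through C₁ (i.e., T₁ ∪ f₁⁻¹(T₂), where f₁ is the function computed by C₁) is complete for the concatenated circuit C₁C₂; hence the minimal complete test set of a concatenation has size at most the sum of the sizes of minimal complete test sets of the parts. -/

import Mathlib

/-- if `T₁` is complete for `C₁` and `T₂` for `C₂`, then
`T₁ ∪ f_{d₁}⁻¹(T₂)` is complete for the concatenated circuit `C₁C₂`. -/
theorem stmt7 {n d₁ d₂ : ℕ}
    (f : Fin (d₁ + 1) → ((Fin n → Bool) ≃ (Fin n → Bool)))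
    (g : Fin (d₂ + 1) → ((Fin n → Bool) ≃ (Fin n → Bool)))
    (T₁ T₂ : Set (Fin n → Bool))
    (h₁ : ∀ (i : Fin (d₁ + 1)) (j : Fin n),
      (∃ t ∈ T₁, f i t j = true) ∧ (∃ t ∈ T₁, f i t j = false))
    (h₂ : ∀ (i : Fin (d₂ + 1)) (j : Fin n),
      (∃ t ∈ T₂, g i t j = true) ∧ (∃ t ∈ T₂, g i t j = false))
    (h : Fin (d₁ + d₂ + 1) → ((Fin n → Bool) ≃ (Fin n → Bool)))
    (hh1 : ∀ i : Fin (d₁ + 1), h (Fin.castLE (by omega) i) = f i)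
    (hh2 : ∀ i : Fin (d₂ + 1),
      h ⟨d₁ + i.1, by have := i.2; omega⟩ = (f (Fin.last d₁)).trans (g i)) :
    ∀ (i : Fin (d₁ + d₂ + 1)) (j : Fin n),
      (∃ t ∈ T₁ ∪ (f (Fin.last d₁)).symm '' T₂, h i t j = true) ∧
      (∃ t ∈ T₁ ∪ (f (Fin.last d₁)).symm '' T₂, h i t j = false) := by
  intro i j
  by_cases hle : i.1 ≤ d₁
  · have : h i = f ⟨i.1, by omega⟩ := by
      have := hh1 ⟨i.1, by omega⟩
      convert this using 2
      ext; simp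
    rw [this]
    obtain ⟨⟨t1, ht1, e1⟩, ⟨t2, ht2, e2⟩⟩ := h₁ ⟨i.1, by omega⟩ j
    exact ⟨⟨t1, Or.inl ht1, e1⟩, ⟨t2, Or.inl ht2, e2⟩⟩
  · set k : Fin (d₂ + 1) := ⟨i.1 - d₁, by have := i.2; omega⟩ with hk
    have : h i = (f (Fin.last d₁)).trans (g k) := by
      have := hh2 k
      convert this using 2
      ext; simp [hk]; omega
    rw [this]
    obtain ⟨⟨t1, ht1, e1⟩, ⟨t2, ht2, e2⟩⟩ := h₂ k j
    refine ⟨⟨(f (Fin.last d₁)).symm t1, Or.inr ⟨t1, ht1, rfl⟩, ?_⟩,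
            ⟨(f (Fin.last d₁)).symm t2, Or.inr ⟨t2, ht2, rfl⟩, ?_⟩⟩ <;>
      simp [e1, e2]
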